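/- Let p be a prime. Then for every n with 1 ≤ n ≤ p-1 one has B_n ≡ ∑_{m=1}^{p-1} (-1)^m D_{m-1} (-m)^n (mod p). -/

import Mathlib

open Finset


/-- The Bell numbers: `bell n` is the number of partitions of an `n`-element set,
determined by `bell 0 = 1` and `bell (n+1) = ∑_{k=0}^{n} C(n,k) * bell k`. -/
def bell : ℕ → ℕ
  | 0 => 1
  | n + 1 => ∑ k ∈ (Finset.range (n + 1)).attach, n.choose k * bell k
decreasing_by exact Finset.mem_range.mp k.2


lemma bell_succ (n : ℕ) : bell (n + 1) = ∑ k ∈ Finset.range (n + 1), n.choose k * bell k := by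
  rw [bell]; exact Finset.sum_attach (Finset.range (n+1)) (fun k => n.choose k * bell k)

lemma bell_zero : bell 0 = 1 := by rw [bell]

lemma I1 (N : ℕ) :
    ∑ k ∈ range (N + 1), (-1 : ℤ) ^ k * k.factorial * N.choose k =
      (-1) ^ N * numDerangements N := by
  rw [numDerangements_sum, Finset.mul_sum,
    ← Finset.sum_range_reflect (fun k => (-1 : ℤ) ^ k * k.factorial * N.choose k) (N + 1)]
  refine Finset.sum_congr rfl fun k hk => ?_
  have hk' : k ≤ N := Nat.lt_succ_iff.mp (Finset.mem_range.mp hk)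
  have h1 : N + 1 - 1 - k = N - k := by omega
  rw [h1]
  have hnat : (N - k).factorial * N.choose (N - k) * k.factorial
      = Nat.ascFactorial (k + 1) (N - k) * k.factorial := by
    have h2 := Nat.factorial_mul_ascFactorial k (N - k)
    have h3 : k + (N - k) = N := by omega
    rw [h3] at h2
    have h4 : N.choose (N - k) = N.choose k := Nat.choose_symm hk'
    have h5 := Nat.choose_mul_factorial_mul_factorial hk'
    calc (N - k).factorial * N.choose (N - k) * k.factorial
        = N.choose k * k.factorial * (N - k).factorial := by rw [h4]; ring
      _ = N.factorial := h5
      _ = k.factorial * Nat.ascFactorial (k + 1) (N - k) := h2.symm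
      _ = Nat.ascFactorial (k + 1) (N - k) * k.factorial := by ring
  have hsign : (-1 : ℤ) ^ (N - k) = (-1) ^ N * (-1) ^ k := by
    have : (-1 : ℤ) ^ (N - k) * (-1) ^ k = (-1) ^ N := by
      rw [← pow_add]; congr 1; omega
    calc (-1 : ℤ) ^ (N - k) = (-1 : ℤ) ^ (N - k) * ((-1) ^ k * (-1) ^ k) := by
          rw [← mul_pow]; norm_num
      _ = (-1) ^ N * (-1) ^ k := by rw [← mul_assoc, this]
  have hnat' : ((N - k).factorial * N.choose (N - k) : ℤ)
      = (Nat.ascFactorial (k + 1) (N - k) : ℤ) := by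
    have := Nat.eq_of_mul_eq_mul_right k.factorial_pos hnat
    exact_mod_cast congrArg (Nat.cast : ℕ → ℤ) this
  rw [hsign]
  -- (cast already normalized)
  linear_combination ((-1:ℤ)^N * (-1)^k) * hnat'

lemma E2 (N : ℕ) :
    ∑ m ∈ Icc 1 N, (-1 : ℤ) ^ m * numDerangements (m - 1) =
      -∑ k ∈ range N, (-1 : ℤ) ^ k * k.factorial * N.choose (k + 1) := by
  induction N with
  | zero => simp
  | succ N ih =>
    have hIcc : Icc 1 (N + 1) = insert (N + 1) (Icc 1 N) := by
      ext x; simp only [Finset.mem_Icc, Finset.mem_insert]; omega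
    have hnotin : N + 1 ∉ Icc 1 N := by simp
    rw [hIcc, Finset.sum_insert hnotin, ih]
    have h1 : ∑ k ∈ range (N + 1), (-1 : ℤ) ^ k * k.factorial * (N + 1).choose (k + 1)
        = (-1) ^ N * numDerangements N
          + ∑ k ∈ range N, (-1 : ℤ) ^ k * k.factorial * N.choose (k + 1) := by
      have hterm : ∀ k ∈ range (N + 1),
          (-1 : ℤ) ^ k * k.factorial * (N + 1).choose (k + 1)
          = (-1 : ℤ) ^ k * k.factorial * N.choose k
            + (-1 : ℤ) ^ k * k.factorial * N.choose (k + 1) := by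
        intro k _
        have h := Nat.choose_succ_succ N k
        push_cast [h]
        ring
      rw [Finset.sum_congr rfl hterm, Finset.sum_add_distrib, I1 N, Finset.sum_range_succ,
        Nat.choose_succ_self]
      push_cast
      ring
    rw [h1]
    have h2 : N + 1 - 1 = N := by omega
    rw [h2]
    ring

lemma choose_cast {p : ℕ} (hp : p.Prime) : ∀ k, k ≤ p - 1 → ((p - 1).choose k : ZMod p) = (-1) ^ k := by
  haveI : Fact p.Prime := ⟨hp⟩
  have h2 := hp.two_le
  intro k
  induction k with
  | zero => intro _; simp
  | succ k ih =>
    intro hk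
    have hk' : k ≤ p - 1 := by omega
    have hps : p.choose (k + 1) = (p - 1).choose k + (p - 1).choose (k + 1) := by
      have h3 : p - 1 + 1 = p := by omega
      conv_lhs => rw [← h3]
      exact Nat.choose_succ_succ _ _
    have hdvd : p ∣ p.choose (k + 1) := hp.dvd_choose_self (by omega) (by omega)
    have hz : ((p.choose (k + 1) : ZMod p)) = 0 :=
      (ZMod.natCast_eq_zero_iff _ _).mpr hdvd
    rw [hps] at hz
    push_cast at hz
    rw [ih hk'] at hz
    have : ((p - 1).choose (k + 1) : ZMod p) = -(-1) ^ k := by linear_combination hz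
    rw [this, pow_succ]
    ring

lemma powsum {p : ℕ} (hp : p.Prime) (n : ℕ) (h1 : 1 ≤ n) (h2 : n ≤ p - 2) :
    ∑ m ∈ Icc 1 (p - 1), ((m : ZMod p)) ^ n = 0 := by
  haveI : Fact p.Prime := ⟨hp⟩
  have hple := hp.two_le
  have hall : ∑ x : ZMod p, x ^ n = 0 := by
    apply FiniteField.sum_pow_lt_card_sub_one
    rw [ZMod.card]
    omega
  have hbij : ∑ m ∈ range p, ((m : ZMod p)) ^ n = ∑ x : ZMod p, x ^ n := by
    refine Finset.sum_nbij' (fun m => (m : ZMod p)) (fun x => x.val) ?_ ?_ ?_ ?_ ?_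
    · intro a _; exact Finset.mem_univ _
    · intro x _; exact Finset.mem_range.mpr (ZMod.val_lt x)
    · intro a ha; exact ZMod.val_cast_of_lt (Finset.mem_range.mp ha)
    · intro x _; exact ZMod.natCast_zmod_val x
    · intro a _; rfl
  have hsplit : range p = insert 0 (Icc 1 (p - 1)) := by
    ext x; simp only [Finset.mem_range, Finset.mem_insert, Finset.mem_Icc]; omega
  rw [hsplit, Finset.sum_insert (by simp)] at hbij
  rw [Nat.cast_zero, zero_pow (by omega : n ≠ 0), zero_add] at hbij
  rw [hbij, hall]

lemma fact_sum_eq {p : ℕ} (hp : p.Prime) (hp2 : p ≠ 2) :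
    (numDerangements (p - 1) : ZMod p) = ∑ k ∈ range p, (k.factorial : ZMod p) := by
  haveI : Fact p.Prime := ⟨hp⟩
  have h2 := hp.two_le
  have hodd : Odd p := hp.odd_of_ne_two hp2
  have h3 : p - 1 + 1 = p := by omega
  have heven : Even (p - 1) := Nat.Odd.sub_odd hodd odd_one
  have := congrArg (fun z : ℤ => (z : ZMod p)) (I1 (p - 1))
  simp only [h3] at this
  push_cast at this
  rw [heven.neg_one_pow, one_mul] at this
  rw [← this]
  refine Finset.sum_congr rfl fun k hk => ?_
  have hk' : k ≤ p - 1 := by have := Finset.mem_range.mp hk; omega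
  rw [choose_cast hp k hk']
  have : ((-1 : ZMod p) ^ k) * ((-1) ^ k) = 1 := by
    rw [← mul_pow]; norm_num
  linear_combination (k.factorial : ZMod p) * this

lemma C1 {p : ℕ} (hp : p.Prime) (hp2 : p ≠ 2) :
    ∑ m ∈ Icc 1 (p - 1), (-1 : ZMod p) ^ m * (numDerangements (m - 1) : ZMod p)
      = (numDerangements (p - 1) : ZMod p) + 1 := by
  haveI : Fact p.Prime := ⟨hp⟩
  have h2 := hp.two_le
  have h3 : p - 1 + 1 = p := by omega
  have he2 := congrArg (fun z : ℤ => (z : ZMod p)) (E2 (p - 1))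
  push_cast at he2
  rw [he2]
  have hterm : ∀ k ∈ range (p - 1),
      (-1 : ZMod p) ^ k * (k.factorial : ZMod p) * ((p - 1).choose (k + 1) : ZMod p)
      = -(k.factorial : ZMod p) := by
    intro k hk
    have hk' : k + 1 ≤ p - 1 := by have := Finset.mem_range.mp hk; omega
    rw [choose_cast hp (k + 1) hk', pow_succ]
    have : ((-1 : ZMod p) ^ k) * ((-1) ^ k) = 1 := by
      rw [← mul_pow]; norm_num
    linear_combination -(k.factorial : ZMod p) * this
  rw [Finset.sum_congr rfl hterm, Finset.sum_neg_distrib, neg_neg]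
  rw [fact_sum_eq hp hp2]
  have : range p = insert (p - 1) (range (p - 1)) := by
    conv_lhs => rw [← h3]
    exact Finset.range_add_one
  rw [this, Finset.sum_insert (by simp)]
  rw [ZMod.wilsons_lemma]
  ring

lemma drec {p : ℕ} (μ : ℕ) (hμ : 1 ≤ μ) :
    ((μ : ZMod p)) * (numDerangements (μ - 1) : ZMod p)
      = (numDerangements μ : ZMod p) - (-1) ^ μ := by
  obtain ⟨ν, rfl⟩ : ∃ ν, μ = ν + 1 := ⟨μ - 1, by omega⟩
  have hc := congrArg (fun z : ℤ => (z : ZMod p)) (numDerangements_succ ν)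
  push_cast at hc
  have hs : ν + 1 - 1 = ν := rfl
  rw [hs]
  rw [pow_succ]
  push_cast
  linear_combination -hc

lemma bin' {R : Type*} [CommRing R] (x : R) (m : ℕ) :
    ∑ k ∈ Icc 1 m, (m.choose k : R) * x ^ k = (1 + x) ^ m - 1 := by
  have hb : (x + 1) ^ m = ∑ k ∈ range (m + 1), x ^ k * 1 ^ (m - k) * m.choose k :=
    add_pow x 1 m
  have hr : range (m + 1) = insert 0 (Icc 1 m) := by
    ext y; simp only [Finset.mem_range, Finset.mem_insert, Finset.mem_Icc]; omega
  rw [hr, Finset.sum_insert (by simp)] at hb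
  simp only [pow_zero, one_pow, one_mul, mul_one, Nat.choose_zero_right, Nat.cast_one] at hb
  have : ∑ k ∈ Icc 1 m, (m.choose k : R) * x ^ k = ∑ k ∈ Icc 1 m, x ^ k * (m.choose k : R) := by
    refine Finset.sum_congr rfl fun k _ => ?_; ring
  rw [this]
  have h1x : (1 + x) = (x + 1) := by ring
  rw [h1x, hb]
  ring

theorem bell_eq_sum_derangements (p : ℕ) (hp : p.Prime) (n : ℕ)
    (hn1 : 1 ≤ n) (hn2 : n ≤ p - 1) :
    (bell n : ZMod p)
      = ∑ m ∈ Finset.Icc 1 (p - 1),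
          (-1) ^ m * (numDerangements (m - 1) : ZMod p) * (-(m : ZMod p)) ^ n := by
  haveI : Fact p.Prime := ⟨hp⟩
  have h2 := hp.two_le
  by_cases hp2 : p = 2
  · subst hp2
    have hn : n = 1 := by omega
    subst hn
    rw [bell_succ]
    norm_num [bell_zero]
    rfl
  have hodd : Odd p := hp.odd_of_ne_two hp2
  have h3 : p - 1 + 1 = p := by omega
  have hp3 : 3 ≤ p := by rcases hodd with ⟨t, ht⟩; omega
  revert hn1 hn2
  induction n using Nat.strong_induction_on with
  | _ n ih =>
  intro hn1 hn2
  obtain ⟨m, rfl⟩ : ∃ m, n = m + 1 := ⟨n - 1, by omega⟩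
  -- abbreviations
  set R := ZMod p
  -- the two key sums
  set S1 : R := ∑ μ ∈ Icc 1 (p - 1),
      (-1) ^ μ * (numDerangements (μ - 1) : R) * (1 - (μ : R)) ^ m with hS1
  set s : R := ∑ μ ∈ Icc 1 (p - 1),
      (-1) ^ μ * (numDerangements (μ - 1) : R) with hs
  -- Bell side
  have hbell : (bell (m + 1) : R) = 1 + (S1 - s) := by
    rw [bell_succ]
    push_cast
    have hr : range (m + 1) = insert 0 (Icc 1 m) := by
      ext y; simp only [Finset.mem_range, Finset.mem_insert, Finset.mem_Icc]; omega
    rw [hr, Finset.sum_insert (by simp)]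
    simp only [Nat.choose_zero_right, Nat.cast_one, bell_zero, one_mul]
    have hmid : ∑ k ∈ Icc 1 m, (m.choose k : R) * (bell k : R) = S1 - s := by
      have hIH : ∀ k ∈ Icc 1 m, (m.choose k : R) * (bell k : R)
          = ∑ μ ∈ Icc 1 (p - 1),
              (-1) ^ μ * (numDerangements (μ - 1) : R) * ((m.choose k : R) * (-(μ : R)) ^ k) := by
        intro k hk
        rw [Finset.mem_Icc] at hk
        rw [ih k (by omega) (by omega) (by omega)]
        rw [Finset.mul_sum]
        refine Finset.sum_congr rfl fun μ _ => ?_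
        ring
      rw [Finset.sum_congr rfl hIH, Finset.sum_comm]
      have hinner : ∀ μ ∈ Icc 1 (p - 1),
          ∑ k ∈ Icc 1 m, (-1) ^ μ * (numDerangements (μ - 1) : R)
              * ((m.choose k : R) * (-(μ : R)) ^ k)
          = (-1) ^ μ * (numDerangements (μ - 1) : R) * (1 - (μ : R)) ^ m
            - (-1) ^ μ * (numDerangements (μ - 1) : R) := by
        intro μ _
        rw [← Finset.mul_sum, bin' (-(μ : R)) m]
        have hb : (1 + -(μ : R)) = (1 - (μ : R)) := by ring
        rw [hb]
        ring
      rw [Finset.sum_congr rfl hinner, Finset.sum_sub_distrib]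
    have hc := Nat.cast_sum (R := R) (Icc 1 m) (fun x => m.choose x * bell x)
    simp only [Nat.cast_mul] at hc
    rw [Nat.cast_add, Nat.cast_one, hc, hmid]
  rw [hbell]
  -- derangement-side computation
  have hterm : ∀ μ ∈ Icc 1 (p - 1),
      (-1) ^ μ * (numDerangements (μ - 1) : R) * (-(μ : R)) ^ (m + 1)
      = (-1) ^ (μ + 1) * (numDerangements μ : R) * (-(μ : R)) ^ m + (-(μ : R)) ^ m := by
    intro μ hμ
    rw [Finset.mem_Icc] at hμ
    have hd := drec (p := p) μ hμ.1
    have hsq : ((-1 : R) ^ μ) * ((-1) ^ μ) = 1 := by rw [← mul_pow]; norm_num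
    rw [pow_succ, pow_succ]
    linear_combination (-((-(μ : R)) ^ m) * (-1 : R) ^ μ) * hd + ((-(μ : R)) ^ m) * hsq
  rw [Finset.sum_congr rfl hterm, Finset.sum_add_distrib]
  -- shift the first sum
  have hshift : ∑ μ ∈ Icc 1 (p - 1), (-1 : R) ^ (μ + 1) * (numDerangements μ : R) * (-(μ : R)) ^ m
      = ∑ t ∈ Icc 2 p, (-1 : R) ^ t * (numDerangements (t - 1) : R) * (1 - (t : R)) ^ m := by
    have hmap : Icc 2 p = (Icc 1 (p - 1)).map (addRightEmbedding 1) := by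
      rw [Finset.map_add_right_Icc]
      congr 1
      omega
    rw [hmap, Finset.sum_map]
    refine Finset.sum_congr rfl fun μ _ => ?_
    simp only [addRightEmbedding_apply]
    have hsub : μ + 1 - 1 = μ := rfl
    rw [hsub]
    push_cast
    ring_nf
    simp
  rw [hshift]
  -- split off the endpoints
  have hsplit2 : Icc 2 p = insert p (Icc 2 (p - 1)) := by
    ext y; simp only [Finset.mem_Icc, Finset.mem_insert]; omega
  have hsplit1 : Icc 1 (p - 1) = insert 1 (Icc 2 (p - 1)) := by
    ext y; simp only [Finset.mem_Icc, Finset.mem_insert]; omega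
  have hnotin2 : p ∉ Icc 2 (p - 1) := by simp only [Finset.mem_Icc]; omega
  have hnotin1 : (1 : ℕ) ∉ Icc 2 (p - 1) := by simp only [Finset.mem_Icc]; omega
  rw [hsplit2, Finset.sum_insert hnotin2]
  have hgp : (-1 : R) ^ p * (numDerangements (p - 1) : R) * (1 - (p : R)) ^ m
      = -(numDerangements (p - 1) : R) := by
    rw [ZMod.natCast_self, hodd.neg_one_pow]
    ring_nf
    simp
  rw [hgp]
  have hS1' : S1 = -(0 : R) ^ m
      + ∑ t ∈ Icc 2 (p - 1), (-1 : R) ^ t * (numDerangements (t - 1) : R) * (1 - (t : R)) ^ m := by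
    rw [hS1]
    conv_lhs => rw [hsplit1]
    rw [Finset.sum_insert hnotin1]
    congr 1
    norm_num
    exact neg_one_mul _
  -- the power-sum vanishing
  have hZV : (0 : R) ^ m + ∑ μ ∈ Icc 1 (p - 1), (-(μ : R)) ^ m = 0 := by
    rcases Nat.eq_zero_or_pos m with hm | hm
    · subst hm
      simp only [pow_zero, Finset.sum_const, nsmul_eq_mul, mul_one, Nat.card_Icc]
      have : ((p - 1 + 1 - 1 : ℕ) : R) = -1 := by
        have h4 : p - 1 + 1 - 1 = p - 1 := by omega
        rw [h4]
        have : ((p - 1 : ℕ) : R) = (p : R) - 1 := by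
          push_cast [Nat.cast_sub (by omega : 1 ≤ p)]; ring
        rw [this, ZMod.natCast_self]
        ring
      rw [this]
      ring
    · rw [zero_pow (by omega : m ≠ 0), zero_add]
      have : ∀ μ ∈ Icc 1 (p - 1), (-(μ : R)) ^ m = (-1 : R) ^ m * ((μ : R)) ^ m := by
        intro μ _
        rw [neg_pow]
      rw [Finset.sum_congr rfl this, ← Finset.mul_sum, powsum hp m hm (by omega), mul_zero]
  -- C1
  have hc1 := C1 hp hp2
  rw [← hs] at hc1
  -- final algebra
  linear_combination hS1' - hZV - hc1
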